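/- Let R be a G-graded ring and f a central homogeneous idempotent of R. Then R is graded NR-clean if and only if both corner rings fR and (1−f)R (with their induced G-gradings) are graded NR-clean. -/

import Mathlib

/-- An element is homogeneous w.r.t. a grading family `𝒜` if it lies in some component. -/
def Homogeneous {G : Type*} [Group G] {R : Type*} [Ring R]
    (𝒜 : G → AddSubgroup R) (x : R) : Prop := ∃ g, x ∈ 𝒜 g

/-- A graded-regular element: homogeneous `r` with `r = r * a * r` for some homogeneous `a`. -/
def GradedRegular {G : Type*} [Group G] {R : Type*} [Ring R]
    (𝒜 : G → AddSubgroup R) (r : R) : Prop :=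
  Homogeneous 𝒜 r ∧ ∃ a : R, Homogeneous 𝒜 a ∧ r = r * a * r

/-- Graded NR-clean: every homogeneous element is a sum of a graded-regular element
and a homogeneous nilpotent element. -/
def GradedNRClean {G : Type*} [Group G] {R : Type*} [Ring R]
    (𝒜 : G → AddSubgroup R) : Prop :=
  ∀ x : R, Homogeneous 𝒜 x →
    ∃ r n : R, GradedRegular 𝒜 r ∧ Homogeneous 𝒜 n ∧ IsNilpotent n ∧ x = r + n

/-- `𝒜` is a `G`-grading of the ring `R`. -/
structure IsGrading {G : Type*} [Group G] [DecidableEq G] {R : Type*} [Ring R]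
    (𝒜 : G → AddSubgroup R) : Prop where
  one_mem : (1 : R) ∈ 𝒜 1
  mul_mem : ∀ {g h : G} {a b : R}, a ∈ 𝒜 g → b ∈ 𝒜 h → a * b ∈ 𝒜 (g * h)
  isInternal : DirectSum.IsInternal 𝒜

section Aux

variable {G : Type*} [Group G] [DecidableEq G] {R : Type*} [Ring R]
variable {𝒜 : G → AddSubgroup R}

/-- Existence of the additive projection onto the degree-`g` component. -/
lemma IsGrading.proj (hG : IsGrading 𝒜) (g : G) :
    ∃ P : R → R, (∀ y z : R, P (y + z) = P y + P z) ∧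
      ∀ {k : G} {y : R}, y ∈ 𝒜 k → P y = if k = g then y else 0 := by
  have hbij := hG.isInternal
  set E := AddEquiv.ofBijective (DirectSum.coeAddMonoidHom 𝒜) hbij with hE
  refine ⟨fun y => ((E.symm y) g : R), ?_, ?_⟩
  · intro y z
    show ((E.symm (y + z)) g : R) = ((E.symm y) g : R) + ((E.symm z) g : R)
    rw [map_add, DirectSum.add_apply, AddSubgroup.coe_add]
  · intro k y hy
    show ((E.symm y) g : R) = if k = g then y else 0
    have h1 : E.symm y = DirectSum.of (fun i => 𝒜 i) k ⟨y, hy⟩ := by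
      apply E.injective
      rw [AddEquiv.apply_symm_apply]
      show y = E (DirectSum.of (fun i => 𝒜 i) k ⟨y, hy⟩)
      have : E (DirectSum.of (fun i => 𝒜 i) k ⟨y, hy⟩)
          = DirectSum.coeAddMonoidHom 𝒜 (DirectSum.of (fun i => 𝒜 i) k ⟨y, hy⟩) := rfl
      rw [this, DirectSum.coeAddMonoidHom_of]
    rw [h1]
    by_cases hk : k = g
    · subst hk
      rw [DirectSum.of_eq_same, if_pos rfl]
    · rw [DirectSum.of_eq_of_ne _ _ _ (Ne.symm hk), if_neg hk, AddSubgroup.coe_zero]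

/-- Distinct components intersect trivially. -/
lemma IsGrading.eq_zero_of_mem_ne (hG : IsGrading 𝒜) {g h : G} (hgh : g ≠ h) {x : R}
    (hxg : x ∈ 𝒜 g) (hxh : x ∈ 𝒜 h) : x = 0 := by
  obtain ⟨P, -, hP⟩ := hG.proj g
  have h1 := hP hxg
  have h2 := hP hxh
  rw [if_pos rfl] at h1
  rw [if_neg (Ne.symm hgh)] at h2
  rw [← h1, h2]

/-- Normalize a two-term decomposition of an element of `𝒜 g` so that both terms lie
in `𝒜 g` (each new term is the old one or zero). -/
lemma IsGrading.normalize (hG : IsGrading 𝒜) {g h m : G} {x r n : R}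
    (hx : x ∈ 𝒜 g) (hr : r ∈ 𝒜 h) (hn : n ∈ 𝒜 m) (heq : x = r + n) :
    ∃ r' n' : R, r' ∈ 𝒜 g ∧ n' ∈ 𝒜 g ∧ x = r' + n' ∧
      (r' = r ∨ r' = 0) ∧ (n' = n ∨ n' = 0) := by
  obtain ⟨P, Padd, hP⟩ := hG.proj g
  have hPx : P x = x := by rw [hP hx, if_pos rfl]
  have hkey : x = (if h = g then r else 0) + (if m = g then n else 0) := by
    rw [← hPx, heq, Padd, hP hr, hP hn]
  refine ⟨_, _, ?_, ?_, hkey, ?_, ?_⟩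
  · by_cases hh : h = g
    · rw [if_pos hh]; exact hh ▸ hr
    · rw [if_neg hh]; exact (𝒜 g).zero_mem
  · by_cases hh : m = g
    · rw [if_pos hh]; exact hh ▸ hn
    · rw [if_neg hh]; exact (𝒜 g).zero_mem
  · by_cases hh : h = g
    · exact Or.inl (if_pos hh)
    · exact Or.inr (if_neg hh)
  · by_cases hh : m = g
    · exact Or.inl (if_pos hh)
    · exact Or.inr (if_neg hh)

/-- Normalize the "inner inverse" witness to degree `g⁻¹`. -/
lemma IsGrading.normalize_inner (hG : IsGrading 𝒜) {g k : G} {ρ a : R}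
    (hρ : ρ ∈ 𝒜 g) (ha : a ∈ 𝒜 k) (hreg : ρ = ρ * a * ρ) :
    ∃ α : R, α ∈ 𝒜 g⁻¹ ∧ ρ = ρ * α * ρ ∧ (α = a ∨ α = 0) := by
  by_cases hk : k = g⁻¹
  · exact ⟨a, hk ▸ ha, hreg, Or.inl rfl⟩
  · have hmem : ρ * a * ρ ∈ 𝒜 (g * k * g) := hG.mul_mem (hG.mul_mem hρ ha) hρ
    have hne : g ≠ g * k * g := by
      intro hcon
      apply hk
      have : g * 1 = g * (k * g) := by rw [mul_one, ← mul_assoc, ← hcon]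
      have h2 : (1 : G) = k * g := mul_left_cancel this
      exact eq_inv_of_mul_eq_one_left h2.symm
    have hρ0 : ρ = 0 := hG.eq_zero_of_mem_ne hne hρ (hreg ▸ hmem)
    exact ⟨0, (𝒜 g⁻¹).zero_mem, by rw [hρ0]; simp, Or.inr rfl⟩

/-- A corner component is contained in the original component. -/
lemma corner_le (hG : IsGrading 𝒜) {e : R} (he1 : e ∈ 𝒜 1) (g : G) :
    (𝒜 g).map (AddMonoidHom.mulLeft e) ≤ 𝒜 g := by
  rintro x hx
  rw [AddSubgroup.mem_map] at hx
  obtain ⟨y, hy, rfl⟩ := hx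
  have := hG.mul_mem he1 hy
  rwa [one_mul] at this

/-- If `R` is graded NR-clean, so is any corner `eR` for a central homogeneous idempotent. -/
lemma corner_clean (hG : IsGrading 𝒜) {e : R} (he1 : e ∈ 𝒜 1)
    (hec : ∀ s : R, e * s = s * e) (hei : e * e = e) (h : GradedNRClean 𝒜) :
    GradedNRClean (fun g => (𝒜 g).map (AddMonoidHom.mulLeft e)) := by
  have hmul : ∀ s t : R, (e * s) * (e * t) = e * (s * t) := by
    intro s t
    calc (e * s) * (e * t) = e * (s * e) * t := by
          rw [mul_assoc, ← mul_assoc s e t, ← mul_assoc]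
    _ = e * (e * s) * t := by rw [← hec]
    _ = (e * e) * (s * t) := by rw [← mul_assoc, ← mul_assoc, mul_assoc e e s]
    _ = e * (s * t) := by rw [hei]
  rintro x ⟨g, hx⟩
  rw [AddSubgroup.mem_map] at hx
  obtain ⟨y, hy, rfl⟩ := hx
  show ∃ r n : R, _
  have hxA : e * y ∈ 𝒜 g := by
    have := hG.mul_mem he1 hy; rwa [one_mul] at this
  obtain ⟨r, n, ⟨⟨h₁, hr⟩, a, ⟨k, ha⟩, hra⟩, ⟨m, hn⟩, hnil, heq⟩ := h (e * y) ⟨g, hxA⟩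
  refine ⟨e * r, e * n, ⟨⟨h₁, AddSubgroup.mem_map.2 ⟨r, hr, rfl⟩⟩,
    e * a, ⟨k, AddSubgroup.mem_map.2 ⟨a, ha, rfl⟩⟩, ?_⟩,
    ⟨m, AddSubgroup.mem_map.2 ⟨n, hn, rfl⟩⟩, ?_, ?_⟩
  · rw [hmul, hmul, ← hra]
  · exact Commute.isNilpotent_mul_left (hec n) hnil
  · have : e * (e * y) = e * r + e * n := by rw [heq, mul_add]
    rwa [← mul_assoc, hei] at this

end Aux

/-- For a central homogeneous idempotent `f`, the ring `R` is graded
NR-clean iff the corner rings `fR` and `(1-f)R` (with components `fR_g` and `(1-f)R_g`)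
are graded NR-clean. -/
theorem stmt12 {G : Type*} [Group G] [DecidableEq G] {R : Type*} [Ring R]
    (𝒜 : G → AddSubgroup R) (hG : IsGrading 𝒜) (f : R)
    (hf1 : f ∈ 𝒜 1) (hfc : f ∈ Set.center R) (hfi : f * f = f) :
    GradedNRClean 𝒜 ↔
      (GradedNRClean (fun g => (𝒜 g).map (AddMonoidHom.mulLeft f)) ∧
        GradedNRClean (fun g => (𝒜 g).map (AddMonoidHom.mulLeft (1 - f)))) := by
  have hc : ∀ s : R, f * s = s * f := fun s => (Semigroup.mem_center_iff.1 hfc s).symm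
  have hc' : ∀ s : R, (1 - f) * s = s * (1 - f) := by
    intro s; rw [sub_mul, mul_sub, one_mul, mul_one, hc]
  have hf1' : (1 : R) - f ∈ 𝒜 1 := (𝒜 1).sub_mem hG.one_mem hf1
  have hfi' : (1 - f) * (1 - f) = 1 - f := by
    have h0 : (1 - f) * (1 - f) = 1 - f - (f - f * f) := by noncomm_ring
    rw [h0, hfi, sub_self, sub_zero]
  -- orthogonality
  have horth : ∀ s t : R, (f * s) * ((1 - f) * t) = 0 := by
    intro s t
    have h0 : f * (1 - f) = 0 := by rw [mul_sub, mul_one, hfi, sub_self]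
    calc (f * s) * ((1 - f) * t) = f * (s * (1 - f)) * t := by
          rw [mul_assoc, ← mul_assoc s (1-f) t, ← mul_assoc]
    _ = f * ((1 - f) * s) * t := by rw [← hc']
    _ = (f * (1 - f)) * (s * t) := by rw [← mul_assoc, mul_assoc (f * (1-f))]
    _ = 0 := by rw [h0, zero_mul]
  have horth' : ∀ s t : R, ((1 - f) * s) * (f * t) = 0 := by
    intro s t
    have h0 : (1 - f) * f = 0 := by rw [sub_mul, one_mul, hfi, sub_self]
    calc ((1 - f) * s) * (f * t) = (1 - f) * (s * f) * t := by
          rw [mul_assoc, ← mul_assoc s f t, ← mul_assoc]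
    _ = (1 - f) * (f * s) * t := by rw [← hc]
    _ = ((1 - f) * f) * (s * t) := by rw [← mul_assoc, mul_assoc ((1-f) * f)]
    _ = 0 := by rw [h0, zero_mul]
  constructor
  · intro h
    exact ⟨corner_clean hG hf1 hc hfi h, corner_clean hG hf1' hc' hfi' h⟩
  · rintro ⟨h₁, h₂⟩
    rintro x ⟨g, hxg⟩
    -- decompose f*x in the corner fR
    obtain ⟨r₁, n₁, ⟨⟨d₁, hr₁⟩, a₁, ⟨k₁, ha₁⟩, hreg₁⟩, ⟨m₁, hn₁⟩, hnil₁, heq₁⟩ :=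
      h₁ (f * x) ⟨g, AddSubgroup.mem_map.2 ⟨x, hxg, rfl⟩⟩
    obtain ⟨r₂, n₂, ⟨⟨d₂, hr₂⟩, a₂, ⟨k₂, ha₂⟩, hreg₂⟩, ⟨m₂, hn₂⟩, hnil₂, heq₂⟩ :=
      h₂ ((1 - f) * x) ⟨g, AddSubgroup.mem_map.2 ⟨x, hxg, rfl⟩⟩
    -- memberships downstairs
    have hfx : f * x ∈ 𝒜 g := by have := hG.mul_mem hf1 hxg; rwa [one_mul] at this
    have hfx' : (1 - f) * x ∈ 𝒜 g := by have := hG.mul_mem hf1' hxg; rwa [one_mul] at this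
    -- shapes: everything in the corner is of the form e * something
    obtain ⟨r₁', hr₁', hr₁e⟩ := AddSubgroup.mem_map.1 hr₁
    obtain ⟨n₁', hn₁', hn₁e⟩ := AddSubgroup.mem_map.1 hn₁
    obtain ⟨a₁', ha₁', ha₁e⟩ := AddSubgroup.mem_map.1 ha₁
    obtain ⟨r₂', hr₂', hr₂e⟩ := AddSubgroup.mem_map.1 hr₂
    obtain ⟨n₂', hn₂', hn₂e⟩ := AddSubgroup.mem_map.1 hn₂
    obtain ⟨a₂', ha₂', ha₂e⟩ := AddSubgroup.mem_map.1 ha₂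
    simp only [AddMonoidHom.coe_mulLeft] at hr₁e hn₁e ha₁e hr₂e hn₂e ha₂e
    -- normalize degrees to g
    obtain ⟨ρ₁, ν₁, hρ₁g, hν₁g, hdec₁, hρ₁c, hν₁c⟩ :=
      hG.normalize hfx (corner_le hG hf1 d₁ hr₁) (corner_le hG hf1 m₁ hn₁) heq₁
    obtain ⟨ρ₂, ν₂, hρ₂g, hν₂g, hdec₂, hρ₂c, hν₂c⟩ :=
      hG.normalize hfx' (corner_le hG hf1' d₂ hr₂) (corner_le hG hf1' m₂ hn₂) heq₂
    -- forms: ρᵢ, νᵢ are of corner shape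
    have hρ₁f : ∃ s, ρ₁ = f * s := by
      rcases hρ₁c with h | h
      · exact ⟨r₁', by rw [h, hr₁e]⟩
      · exact ⟨0, by rw [h, mul_zero]⟩
    have hν₁f : ∃ s, ν₁ = f * s := by
      rcases hν₁c with h | h
      · exact ⟨n₁', by rw [h, hn₁e]⟩
      · exact ⟨0, by rw [h, mul_zero]⟩
    have hρ₂f : ∃ s, ρ₂ = (1 - f) * s := by
      rcases hρ₂c with h | h
      · exact ⟨r₂', by rw [h, hr₂e]⟩
      · exact ⟨0, by rw [h, mul_zero]⟩
    have hν₂f : ∃ s, ν₂ = (1 - f) * s := by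
      rcases hν₂c with h | h
      · exact ⟨n₂', by rw [h, hn₂e]⟩
      · exact ⟨0, by rw [h, mul_zero]⟩
    -- inner inverses for ρᵢ (first: ρᵢ is regular with witness aᵢ or 0)
    have hreg₁' : ∃ b : R, (∃ kb, b ∈ 𝒜 kb) ∧ (∃ s, b = f * s) ∧ ρ₁ = ρ₁ * b * ρ₁ := by
      rcases hρ₁c with h | h
      · exact ⟨a₁, ⟨k₁, corner_le hG hf1 k₁ ha₁⟩, ⟨a₁', ha₁e.symm⟩, by rw [h]; exact hreg₁⟩
      · exact ⟨0, ⟨g, (𝒜 g).zero_mem⟩, ⟨0, by rw [mul_zero]⟩, by rw [h]; simp⟩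
    have hreg₂' : ∃ b : R, (∃ kb, b ∈ 𝒜 kb) ∧ (∃ s, b = (1 - f) * s) ∧ ρ₂ = ρ₂ * b * ρ₂ := by
      rcases hρ₂c with h | h
      · exact ⟨a₂, ⟨k₂, corner_le hG hf1' k₂ ha₂⟩, ⟨a₂', ha₂e.symm⟩, by rw [h]; exact hreg₂⟩
      · exact ⟨0, ⟨g, (𝒜 g).zero_mem⟩, ⟨0, by rw [mul_zero]⟩, by rw [h]; simp⟩
    obtain ⟨b₁, ⟨kb₁, hb₁⟩, ⟨s₁, hbs₁⟩, hbreg₁⟩ := hreg₁'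
    obtain ⟨b₂, ⟨kb₂, hb₂⟩, ⟨s₂, hbs₂⟩, hbreg₂⟩ := hreg₂'
    -- normalize inner inverse degrees to g⁻¹
    obtain ⟨α₁, hα₁g, hαreg₁, hα₁c⟩ := hG.normalize_inner hρ₁g hb₁ hbreg₁
    obtain ⟨α₂, hα₂g, hαreg₂, hα₂c⟩ := hG.normalize_inner hρ₂g hb₂ hbreg₂
    have hα₁f : ∃ s, α₁ = f * s := by
      rcases hα₁c with h | h
      · exact ⟨s₁, by rw [h, hbs₁]⟩
      · exact ⟨0, by rw [h, mul_zero]⟩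
    have hα₂f : ∃ s, α₂ = (1 - f) * s := by
      rcases hα₂c with h | h
      · exact ⟨s₂, by rw [h, hbs₂]⟩
      · exact ⟨0, by rw [h, mul_zero]⟩
    obtain ⟨u₁, hu₁⟩ := hρ₁f
    obtain ⟨v₁, hv₁⟩ := hν₁f
    obtain ⟨u₂, hu₂⟩ := hρ₂f
    obtain ⟨v₂, hv₂⟩ := hν₂f
    obtain ⟨w₁, hw₁⟩ := hα₁f
    obtain ⟨w₂, hw₂⟩ := hα₂f
    -- orthogonality facts between the two corners
    have hfmul : ∀ s t : R, (f * s) * (f * t) = f * (s * t) := by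
      intro s t
      calc (f * s) * (f * t) = f * (s * f) * t := by
            rw [mul_assoc, ← mul_assoc s f t, ← mul_assoc]
      _ = f * (f * s) * t := by rw [← hc]
      _ = (f * f) * (s * t) := by rw [← mul_assoc, mul_assoc (f*f)]
      _ = f * (s * t) := by rw [hfi]
    have hfmul' : ∀ s t : R, ((1 - f) * s) * ((1 - f) * t) = (1 - f) * (s * t) := by
      intro s t
      calc ((1 - f) * s) * ((1 - f) * t) = (1 - f) * (s * (1 - f)) * t := by
            rw [mul_assoc, ← mul_assoc s (1-f) t, ← mul_assoc]
      _ = (1 - f) * ((1 - f) * s) * t := by rw [← hc']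
      _ = ((1 - f) * (1 - f)) * (s * t) := by rw [← mul_assoc, mul_assoc ((1-f)*(1-f))]
      _ = (1 - f) * (s * t) := by rw [hfi']
    -- build the decomposition of x
    refine ⟨ρ₁ + ρ₂, ν₁ + ν₂, ⟨⟨g, (𝒜 g).add_mem hρ₁g hρ₂g⟩, α₁ + α₂,
      ⟨g⁻¹, (𝒜 g⁻¹).add_mem hα₁g hα₂g⟩, ?_⟩,
      ⟨g, (𝒜 g).add_mem hν₁g hν₂g⟩, ?_, ?_⟩
    · -- regularity of ρ₁ + ρ₂
      have e1 : ρ₁ * α₂ = 0 := by rw [hu₁, hw₂]; exact horth _ _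
      have e2 : ρ₂ * α₁ = 0 := by rw [hu₂, hw₁]; exact horth' _ _
      have e3 : (ρ₁ * α₁) * ρ₂ = 0 := by
        rw [hu₁, hw₁, hfmul, hu₂]; exact horth _ _
      have e4 : (ρ₂ * α₂) * ρ₁ = 0 := by
        rw [hu₂, hw₂, hfmul', hu₁]; exact horth' _ _
      calc ρ₁ + ρ₂ = ρ₁ * α₁ * ρ₁ + ρ₂ * α₂ * ρ₂ := by rw [← hαreg₁, ← hαreg₂]
      _ = (ρ₁ + ρ₂) * (α₁ + α₂) * (ρ₁ + ρ₂) := by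
            simp only [add_mul, mul_add, e1, e2, e3, e4, zero_mul, mul_zero,
              add_zero, zero_add]
    · -- nilpotency of ν₁ + ν₂
      have hnilν₁ : IsNilpotent ν₁ := by
        rcases hν₁c with h | h
        · rw [h]; exact hnil₁
        · rw [h]; exact IsNilpotent.zero
      have hnilν₂ : IsNilpotent ν₂ := by
        rcases hν₂c with h | h
        · rw [h]; exact hnil₂
        · rw [h]; exact IsNilpotent.zero
      have hcomm : Commute ν₁ ν₂ := by
        have e1 : ν₁ * ν₂ = 0 := by rw [hv₁, hv₂]; exact horth _ _
        have e2 : ν₂ * ν₁ = 0 := by rw [hv₁, hv₂]; exact horth' _ _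
        unfold Commute SemiconjBy
        rw [e1, e2]
      exact hcomm.isNilpotent_add hnilν₁ hnilν₂
    · -- x = (ρ₁ + ρ₂) + (ν₁ + ν₂)
      have : x = (f * x) + ((1 - f) * x) := by noncomm_ring
      rw [this, hdec₁, hdec₂]; abel
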